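/- Let n be odd, |W| = |M| = n, I = W ∪ M, and let S ≤ G* be a semiregular subgroup. Then there exists φ ∈ G* \ G of order 2 that commutes with every element of S, i.e., C_{G*}(S) ∩ (G* \ G) contains an element of order 2 (equivalently, a matching commuting with all of S). -/

import Mathlib

variable {I : Type*}

/-- `μ` is a matching: it maps `W` into `M` and `M` into `W`, and is an involution. -/
def IsMatching [DecidableEq I] (W M : Finset I) (μ : Equiv.Perm I) : Prop :=
  (∀ x ∈ W, μ x ∈ M) ∧ (∀ y ∈ M, μ y ∈ W) ∧ ∀ z : I, μ (μ z) = z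

/-- `φ ∈ G*`: `φ` preserves the partition `{W, M}`. -/
def InGstar [DecidableEq I] (W M : Finset I) (φ : Equiv.Perm I) : Prop :=
  (W.image ⇑φ = W ∧ M.image ⇑φ = M) ∨ (W.image ⇑φ = M ∧ M.image ⇑φ = W)

/-- `φ ∈ G`: `φ` maps `W` onto `W` and `M` onto `M`. -/
def InG [DecidableEq I] (W M : Finset I) (φ : Equiv.Perm I) : Prop :=
  W.image ⇑φ = W ∧ M.image ⇑φ = M

/-- `s` preserves the side `W` pointwise. -/
def Keeps [DecidableEq I] (W : Finset I) (s : Equiv.Perm I) : Prop :=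
  ∀ x, x ∈ W ↔ s x ∈ W

/-- `s` flips sides pointwise. -/
def Flips [DecidableEq I] (W M : Finset I) (s : Equiv.Perm I) : Prop :=
  ∀ x, x ∈ W ↔ s x ∈ M

section helpers

variable [Fintype I] [DecidableEq I] {W M : Finset I}

lemma memM_iff (hd : Disjoint W M) (hu : W ∪ M = Finset.univ) (x : I) :
    x ∈ M ↔ x ∉ W := by
  constructor
  · intro hM hW
    exact (Finset.disjoint_left.mp hd) hW hM
  · intro hW
    have := Finset.mem_univ x
    rw [← hu, Finset.mem_union] at this
    tauto

lemma keeps_of_inG (hG : InG W M s) : Keeps W s := by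
  intro x
  constructor
  · intro hx
    rw [← hG.1]
    exact Finset.mem_image_of_mem _ hx
  · intro hx
    rw [← hG.1] at hx
    obtain ⟨y, hy, hyx⟩ := Finset.mem_image.mp hx
    rwa [← s.injective hyx]

lemma flips_of_not_inG (hd : Disjoint W M) (hu : W ∪ M = Finset.univ)
    (hst : InGstar W M s) (hG : ¬ InG W M s) : Flips W M s := by
  rcases hst with h | h
  · exact absurd h hG
  · intro x
    constructor
    · intro hx
      rw [← h.1]
      exact Finset.mem_image_of_mem _ hx
    · intro hx
      rw [← h.1] at hx
      obtain ⟨y, hy, hyx⟩ := Finset.mem_image.mp hx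
      rwa [← s.injective hyx]

lemma keeps_M (hd : Disjoint W M) (hu : W ∪ M = Finset.univ) (hk : Keeps W s) (x : I) :
    x ∈ M ↔ s x ∈ M := by
  rw [memM_iff hd hu, memM_iff hd hu, not_iff_not]
  exact hk x

lemma flips_M (hd : Disjoint W M) (hu : W ∪ M = Finset.univ) (hf : Flips W M s) (x : I) :
    x ∈ M ↔ s x ∈ W := by
  constructor
  · intro hx
    have hxW : x ∉ W := (memM_iff hd hu x).mp hx
    by_contra h
    exact hxW ((hf x).mpr ((memM_iff hd hu (s x)).mpr h))
  · intro hx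
    rw [memM_iff hd hu]
    intro hW
    exact (Finset.disjoint_left.mp hd) hx ((hf x).mp hW)

lemma not_keeps_of_flips (hd : Disjoint W M) (hW : W.Nonempty) (hf : Flips W M s) :
    ¬ Keeps W s := by
  intro hk
  obtain ⟨w, hw⟩ := hW
  exact (Finset.disjoint_left.mp hd) ((hk w).mp hw) ((hf w).mp hw)

lemma flips_inv (hd : Disjoint W M) (hu : W ∪ M = Finset.univ) {s : Equiv.Perm I}
    (hf : Flips W M s) : Flips W M s⁻¹ := by
  intro x
  rw [flips_M hd hu hf (s⁻¹ x)]
  simp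

lemma flips_mul_keeps (hd : Disjoint W M) (hu : W ∪ M = Finset.univ)
    {s t : Equiv.Perm I} (hf : Flips W M s) (hk : Keeps W t) : Flips W M (s * t) := by
  intro x
  rw [hk x, hf (t x)]
  rfl

lemma keeps_mul_flips (hd : Disjoint W M) (hu : W ∪ M = Finset.univ)
    {s t : Equiv.Perm I} (hk : Keeps W s) (hf : Flips W M t) : Flips W M (s * t) := by
  intro x
  rw [hf x, keeps_M hd hu hk (t x)]
  rfl

lemma flips_mul_flips (hd : Disjoint W M) (hu : W ∪ M = Finset.univ)
    {s t : Equiv.Perm I} (hf : Flips W M s) (hf' : Flips W M t) : Keeps W (s * t) := by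
  intro x
  rw [hf' x, flips_M hd hu hf (t x)]
  rfl

/-- A flipping permutation is in `G* \ G`. -/
lemma inGstar_of_flips {n : ℕ} (hd : Disjoint W M) (hu : W ∪ M = Finset.univ)
    (hW : W.card = n) (hM : M.card = n) (hn : 2 ≤ n) {φ : Equiv.Perm I}
    (hf : Flips W M φ) : InGstar W M φ ∧ ¬ InG W M φ := by
  have h1 : W.image ⇑φ = M := by
    apply Finset.eq_of_subset_of_card_le
    · intro y hy
      obtain ⟨x, hx, rfl⟩ := Finset.mem_image.mp hy
      exact (hf x).mp hx
    · rw [Finset.card_image_of_injective _ φ.injective, hW, hM]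
  have h2 : M.image ⇑φ = W := by
    apply Finset.eq_of_subset_of_card_le
    · intro y hy
      obtain ⟨x, hx, rfl⟩ := Finset.mem_image.mp hy
      exact (flips_M hd hu hf x).mp hx
    · rw [Finset.card_image_of_injective _ φ.injective, hW, hM]
  refine ⟨Or.inr ⟨h1, h2⟩, ?_⟩
  intro hG
  have hWne : W.Nonempty := by
    rw [← Finset.card_pos, hW]; omega
  obtain ⟨w, hw⟩ := hWne
  have : φ w ∈ W := (keeps_of_inG hG w).mp hw
  exact (Finset.disjoint_left.mp hd) this ((hf w).mp hw)

/-- helper equivalence for counting -/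
def prodSubtypeFst {α β : Type*} (P : α → Prop) : {p : α × β // P p.1} ≃ {a // P a} × β where
  toFun p := (⟨p.1.1, p.2⟩, p.1.2)
  invFun x := ⟨(x.1.1, x.2), x.1.2⟩
  left_inv := by rintro ⟨⟨a, b⟩, h⟩; rfl
  right_inv := by rintro ⟨⟨a, h⟩, b⟩; rfl

end helpers

theorem stmt12 [Fintype I] [DecidableEq I] (W M : Finset I) (n : ℕ)
    (hd : Disjoint W M) (hu : W ∪ M = Finset.univ)
    (hW : W.card = n) (hM : M.card = n) (hn : 2 ≤ n) (hodd : Odd n)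
    (S : Subgroup (Equiv.Perm I)) (hSG : ∀ s ∈ S, InGstar W M s)
    (hsemi : ∀ s ∈ S, (∃ z : I, s z = z) → s = 1) :
    ∃ φ : Equiv.Perm I, InGstar W M φ ∧ ¬ InG W M φ ∧ orderOf φ = 2 ∧
      ∀ s ∈ S, Commute φ s := by
  classical
  have hWne : W.Nonempty := by rw [← Finset.card_pos, hW]; omega
  -- freeness
  have hfree : ∀ (u : ↥S) (x : I), u • x = x → u = 1 := by
    intro u x hx
    have := hsemi u.1 u.2 ⟨x, hx⟩
    exact Subtype.ext this
  -- dichotomy for elements of S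
  have hdich : ∀ u : ↥S, Keeps W u.1 ∨ Flips W M u.1 := by
    intro u
    by_cases h : InG W M u.1
    · exact Or.inl (keeps_of_inG h)
    · exact Or.inr (flips_of_not_inG hd hu (hSG u.1 u.2) h)
  -- the orbit equivalence
  set Q := Quotient (MulAction.orbitRel ↥S I) with hQ
  have hinj : Function.Injective (fun p : Q × ↥S => p.2 • p.1.out) := by
    rintro ⟨q, s⟩ ⟨q', s'⟩ h
    simp only at h
    have hq : q = q' := by
      have horb : q'.out ∈ MulAction.orbit (↥S) q.out := by
        rw [MulAction.mem_orbit_iff]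
        exact ⟨s'⁻¹ * s, by rw [mul_smul, h, inv_smul_smul]⟩
      have h2 : (Quotient.mk (MulAction.orbitRel ↥S I) q'.out)
          = Quotient.mk (MulAction.orbitRel ↥S I) q.out := Quotient.sound horb
      rw [Quotient.out_eq, Quotient.out_eq] at h2
      exact h2.symm
    subst hq
    have h3 : (s'⁻¹ * s) • q.out = q.out := by rw [mul_smul, h, inv_smul_smul]
    have h4 := hfree _ _ h3
    have hs : s' = s := by
      have h5 := congrArg (fun y => s' * y) h4
      simpa [mul_assoc] using h5.symm
    rw [hs]
  have hsurj : Function.Surjective (fun p : Q × ↥S => p.2 • p.1.out) := by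
    intro x
    have horb : (Quotient.mk (MulAction.orbitRel ↥S I) x).out ∈ MulAction.orbit (↥S) x :=
      MulAction.orbitRel_apply.mp (Quotient.mk_out (s := MulAction.orbitRel ↥S I) x)
    obtain ⟨u, hux⟩ := horb
    refine ⟨(Quotient.mk (MulAction.orbitRel ↥S I) x, u⁻¹), ?_⟩
    show u⁻¹ • (Quotient.mk (MulAction.orbitRel ↥S I) x).out = x
    rw [← hux, inv_smul_smul]
  set e : Q × ↥S ≃ I := Equiv.ofBijective _ ⟨hinj, hsurj⟩ with he_def
  have he : ∀ (q : Q) (s : ↥S), e (q, s) = s • q.out := fun _ _ => rfl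
  have hesmul : ∀ (q : Q) (u s : ↥S), (u : Equiv.Perm I) (e (q, s)) = e (q, u * s) := by
    intro q u s
    rw [he, he, mul_smul]
    rfl
  -- the conclusion, given a suitable π on Q × S
  have main : ∀ π : Equiv.Perm (Q × ↥S), (∀ p, π (π p) = p) →
      (∀ (q : Q) (u s : ↥S), π (q, u * s) = ((π (q, s)).1, u * (π (q, s)).2)) →
      (Flips W M (e.permCongr π)) →
      ∃ φ : Equiv.Perm I, InGstar W M φ ∧ ¬ InG W M φ ∧ orderOf φ = 2 ∧
        ∀ s ∈ S, Commute φ s := by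
    intro π hπ2 hπc hπf
    set φ : Equiv.Perm I := e.permCongr π with hφdef
    have hφ : ∀ p : Q × ↥S, φ (e p) = e (π p) := by
      intro p
      rw [hφdef, Equiv.permCongr_apply, Equiv.symm_apply_apply]
    have hφ2 : φ * φ = 1 := by
      ext x
      obtain ⟨p, rfl⟩ := e.surjective x
      show φ (φ (e p)) = e p
      rw [hφ, hφ, hπ2]
    obtain ⟨hst, hng⟩ := inGstar_of_flips hd hu hW hM hn hπf
    refine ⟨φ, hst, hng, ?_, ?_⟩
    · have hne : φ ≠ 1 := by
        intro h1
        obtain ⟨w, hw⟩ := hWne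
        have : φ w ∈ M := (hπf w).mp hw
        rw [h1] at this
        exact (Finset.disjoint_left.mp hd) hw this
      have : φ ^ 2 = 1 := by rw [sq]; exact hφ2
      exact orderOf_eq_prime this hne
    · intro s hs
      have hcomm : φ * s = s * φ := by
        ext x
        obtain ⟨⟨q, u⟩, rfl⟩ := e.surjective x
        show φ (s (e (q, u))) = s (φ (e (q, u)))
        have h1 : s (e (q, u)) = e (q, ⟨s, hs⟩ * u) := hesmul q ⟨s, hs⟩ u
        have h2 : s (e (π (q, u))) = e ((π (q, u)).1, ⟨s, hs⟩ * (π (q, u)).2) :=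
          hesmul _ ⟨s, hs⟩ _
        rw [h1, hφ, hπc, hφ, h2]
      exact hcomm
  by_cases hcase : ∀ s ∈ S, InG W M s
  · -- Case A : S ⊆ G
    have hkeep : ∀ u : ↥S, Keeps W u.1 := fun u => keeps_of_inG (hcase u.1 u.2)
    have hside : ∀ (q : Q) (s : ↥S), e (q, s) ∈ W ↔ q.out ∈ W := by
      intro q s
      rw [he]
      exact (hkeep s q.out).symm
    have hsideM : ∀ (q : Q) (s : ↥S), e (q, s) ∈ M ↔ ¬ q.out ∈ W := by
      intro q s
      rw [memM_iff hd hu, not_iff_not]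
      exact hside q s
    set P : Q → Prop := fun q => q.out ∈ W with hP
    -- cardinality count
    have cardW : Fintype.card {q : Q // P q} * Fintype.card ↥S = n := by
      have e1 : {p : Q × ↥S // P p.1} ≃ {x : I // x ∈ W} :=
        Equiv.subtypeEquiv e (fun p => (hside p.1 p.2).symm)
      calc Fintype.card {q : Q // P q} * Fintype.card ↥S
          = Fintype.card ({q : Q // P q} × ↥S) := (Fintype.card_prod _ _).symm
        _ = Fintype.card {p : Q × ↥S // P p.1} :=
            (Fintype.card_congr (prodSubtypeFst P)).symm
        _ = Fintype.card {x : I // x ∈ W} := Fintype.card_congr e1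
        _ = W.card := Fintype.card_coe W
        _ = n := hW
    have cardM : Fintype.card {q : Q // ¬ P q} * Fintype.card ↥S = n := by
      have e1 : {p : Q × ↥S // ¬ P p.1} ≃ {x : I // x ∈ M} :=
        Equiv.subtypeEquiv e (fun p => (hsideM p.1 p.2).symm)
      calc Fintype.card {q : Q // ¬ P q} * Fintype.card ↥S
          = Fintype.card ({q : Q // ¬ P q} × ↥S) := (Fintype.card_prod _ _).symm
        _ = Fintype.card {p : Q × ↥S // ¬ P p.1} :=
            (Fintype.card_congr (prodSubtypeFst (fun q => ¬ P q))).symm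
        _ = Fintype.card {x : I // x ∈ M} := Fintype.card_congr e1
        _ = M.card := Fintype.card_coe M
        _ = n := hM
    have hSpos : 0 < Fintype.card ↥S := Fintype.card_pos
    have hcards : Fintype.card {q : Q // P q} = Fintype.card {q : Q // ¬ P q} :=
      Nat.eq_of_mul_eq_mul_right hSpos (cardW.trans cardM.symm)
    obtain ⟨β⟩ := Fintype.card_eq.mp hcards
    set f : Q → Q := fun q => if h : P q then (β ⟨q, h⟩ : Q) else (β.symm ⟨q, h⟩ : Q) with hf
    have hPf : ∀ q, P (f q) ↔ ¬ P q := by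
      intro q
      by_cases h : P q
      · simp only [hf, dif_pos h]
        exact iff_of_false (β ⟨q, h⟩).2 (not_not_intro h)
      · simp only [hf, dif_neg h]
        exact iff_of_true (β.symm ⟨q, h⟩).2 h
    have hff : Function.Involutive f := by
      intro q
      by_cases h : P q
      · have h1 : f q = (β ⟨q, h⟩ : Q) := dif_pos h
        have h2 : ¬ P (f q) := fun hp => (hPf q).mp hp h
        have h3 : (⟨f q, h2⟩ : {q : Q // ¬ P q}) = β ⟨q, h⟩ := Subtype.ext h1
        calc f (f q) = (β.symm ⟨f q, h2⟩ : Q) := dif_neg h2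
          _ = q := by rw [h3, Equiv.symm_apply_apply]
      · have h1 : f q = (β.symm ⟨q, h⟩ : Q) := dif_neg h
        have h2 : P (f q) := (hPf q).mpr h
        have h3 : (⟨f q, h2⟩ : {q : Q // P q}) = β.symm ⟨q, h⟩ := Subtype.ext h1
        calc f (f q) = (β ⟨f q, h2⟩ : Q) := dif_pos h2
          _ = q := by rw [h3, Equiv.apply_symm_apply]
    set ι : Equiv.Perm Q := hff.toPerm with hι
    have hιapp : ∀ q, ι q = f q := fun _ => rfl
    set π : Equiv.Perm (Q × ↥S) := Equiv.prodCongr ι (Equiv.refl ↥S) with hπ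
    have hπapp : ∀ (q : Q) (s : ↥S), π (q, s) = (ι q, s) := fun _ _ => rfl
    apply main π
    · intro p
      obtain ⟨q, s⟩ := p
      rw [hπapp, hπapp, hιapp, hιapp, hff q]
    · intro q u s
      rw [hπapp, hπapp]
    · intro x
      obtain ⟨⟨q, u⟩, rfl⟩ := e.surjective x
      have h1 : (e.permCongr π) (e (q, u)) = e (ι q, u) := by
        rw [Equiv.permCongr_apply, Equiv.symm_apply_apply, hπapp]
      rw [h1, hside q u, hsideM (ι q) u, hιapp]
      show P q ↔ ¬ P (f q)
      exact not_not.symm.trans (not_iff_not.mpr (hPf q)).symm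
  · -- Case B : some element of S is not in G
    push_neg at hcase
    obtain ⟨τ, hτS, hτG⟩ := hcase
    have hτf : Flips W M τ := flips_of_not_inG hd hu (hSG τ hτS) hτG
    -- S has even cardinality
    have hflip_iff : ∀ u : ↥S, ¬ Keeps W u.1 ↔ Flips W M u.1 := by
      intro u
      constructor
      · intro h
        rcases hdich u with h' | h'
        · exact absurd h' h
        · exact h'
      · intro h
        exact not_keeps_of_flips hd hWne h
    have γ : {u : ↥S // Keeps W u.1} ≃ {u : ↥S // ¬ Keeps W u.1} := by
      refine ⟨fun u => ⟨⟨τ, hτS⟩ * u.1, ?_⟩, fun v => ⟨⟨τ, hτS⟩⁻¹ * v.1, ?_⟩, ?_, ?_⟩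
      · rw [hflip_iff]
        exact flips_mul_keeps hd hu hτf u.2
      · have hv : Flips W M v.1.1 := (hflip_iff v.1).mp v.2
        have hτinv : Flips W M τ⁻¹ := flips_inv hd hu hτf
        have : Keeps W (τ⁻¹ * v.1.1) := flips_mul_flips hd hu hτinv hv
        exact this
      · intro u
        apply Subtype.ext
        apply Subtype.ext
        show (τ⁻¹ * (τ * u.1.1) : Equiv.Perm I) = u.1.1
        group
      · intro v
        apply Subtype.ext
        apply Subtype.ext
        show (τ * (τ⁻¹ * v.1.1) : Equiv.Perm I) = v.1.1
        group
    have hcardeq : Fintype.card {u : ↥S // Keeps W u.1}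
        = Fintype.card {u : ↥S // ¬ Keeps W u.1} := Fintype.card_congr γ
    have hcardsum : Fintype.card ↥S = Fintype.card {u : ↥S // Keeps W u.1}
        + Fintype.card {u : ↥S // ¬ Keeps W u.1} := by
      rw [Fintype.card_congr (Equiv.sumCompl (fun u : ↥S => Keeps W u.1)).symm,
        Fintype.card_sum]
    have hdvd : 2 ∣ Fintype.card ↥S := by omega
    obtain ⟨t, ht⟩ := exists_prime_orderOf_dvd_card (G := ↥S) 2 hdvd
    have ht2 : t * t = 1 := by
      have := pow_orderOf_eq_one t
      rwa [ht, sq] at this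
    have htne : t ≠ 1 := by
      intro h
      rw [h, orderOf_one] at ht
      omega
    -- t must flip, since n is odd
    have htf : Flips W M t.1 := by
      rcases hdich t with hk | hfl
      · exfalso
        set t' : Equiv.Perm {x : I // x ∈ W} := (t.1 : Equiv.Perm I).subtypePerm (fun x => (hk x).symm) with ht'
        have h2 : (t.1 : Equiv.Perm I) * t.1 = 1 := by
          have := congrArg (fun u : ↥S => (u : Equiv.Perm I)) ht2
          exact this
        have ht'2 : t' ^ 2 ^ 1 = 1 := by
          ext x
          simp only [pow_one, sq, Equiv.Perm.mul_apply, Equiv.Perm.one_apply, ht',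
            Equiv.Perm.subtypePerm_apply]
          calc (t.1 : Equiv.Perm I) ((t.1 : Equiv.Perm I) x.1)
              = ((t.1 : Equiv.Perm I) * t.1) x.1 := rfl
            _ = x.1 := by rw [h2]; rfl
        have hcard : ¬ (2 ∣ Fintype.card {x : I // x ∈ W}) := by
          rw [Fintype.card_coe, hW]
          rw [Nat.odd_iff] at hodd
          omega
        obtain ⟨a, ha⟩ := Equiv.Perm.exists_fixed_point_of_prime hcard ht'2
        have hfix : (t.1 : Equiv.Perm I) a.1 = a.1 := congrArg Subtype.val ha
        have := hsemi t.1 t.2 ⟨a.1, hfix⟩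
        exact htne (Subtype.ext this)
      · exact hfl
    set π : Equiv.Perm (Q × ↥S) := Equiv.prodCongr (Equiv.refl Q) (Equiv.mulRight t) with hπ
    have hπapp : ∀ (q : Q) (s : ↥S), π (q, s) = (q, s * t) := fun _ _ => rfl
    apply main π
    · intro p
      obtain ⟨q, s⟩ := p
      rw [hπapp, hπapp, mul_assoc, ht2, mul_one]
    · intro q u s
      rw [hπapp, hπapp, mul_assoc]
    · intro x
      obtain ⟨⟨q, u⟩, rfl⟩ := e.surjective x
      have h1 : (e.permCongr π) (e (q, u)) = e (q, u * t) := by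
        rw [Equiv.permCongr_apply, Equiv.symm_apply_apply, hπapp]
      rw [h1, he, he, mul_smul]
      show (u : Equiv.Perm I) q.out ∈ W ↔ (u : Equiv.Perm I) ((t : Equiv.Perm I) q.out) ∈ M
      rcases hdich u with hk | hfl
      · rw [← hk q.out, ← keeps_M hd hu hk ((t : Equiv.Perm I) q.out)]
        show q.out ∈ W ↔ _
        exact htf q.out
      · show (u : Equiv.Perm I) q.out ∈ W ↔ _
        rw [← flips_M hd hu hfl q.out, ← hfl ((t : Equiv.Perm I) q.out)]
        exact flips_M hd hu htf q.out
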